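/- For p, q ∈ ℍ with p not on the 2-sphere [−q] (i.e. it is not the case that Re p = −Re q and |Im p| = |Im q|), set k(p, q) = (p̄ + q̄)(|p|² + 2 Re(p) q̄ + q̄²)⁻¹. Then p · k(p, q) + k(p, q) · q̄ = 1. -/

import Mathlib

local notation "ℍ" => Quaternion ℝ

set_option maxHeartbeats 1000000

/-- The reproducing kernel `k(p, q) = (p̄ + q̄)(|p|² + 2 Re(p) q̄ + q̄²)⁻¹` of the Hardy
space of the half-space `ℍ₊` satisfies `p k(p, q) + k(p, q) q̄ = 1` whenever `p` is not on
the sphere `[−q]`. -/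
theorem hardy_kernel_identity (p q : ℍ)
    (h : ¬(p.re = -q.re ∧ ‖p.im‖ = ‖q.im‖)) :
    p * ((star p + star q) *
          (((Quaternion.normSq p : ℝ) : ℍ) + 2 * (p.re : ℍ) * star q + (star q) ^ 2)⁻¹) +
      ((star p + star q) *
          (((Quaternion.normSq p : ℝ) : ℍ) + 2 * (p.re : ℍ) * star q + (star q) ^ 2)⁻¹) *
        star q = 1 := by
  set D : ℍ := ((Quaternion.normSq p : ℝ) : ℍ) + 2 * (p.re : ℍ) * star q + (star q) ^ 2 with hDdef
  have hD : D ≠ 0 := by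
    intro hD0
    apply h
    rw [hDdef] at hD0
    rw [Quaternion.ext_iff] at hD0
    simp [Quaternion.normSq_def', pow_two, two_mul, Quaternion.re_zero, Quaternion.imI_zero, Quaternion.imJ_zero, Quaternion.imK_zero] at hD0
    obtain ⟨h1, h2, h3, h4⟩ := hD0
    have hre : p.re = -q.re := by
      by_contra hne
      have hs : p.re + q.re ≠ 0 := fun hz => hne (by linarith)
      have e2 : q.imI = 0 := by
        have : (p.re + q.re) * q.imI = 0 := by nlinarith [h2]
        rcases mul_eq_zero.mp this with h' | h'
        · exact absurd h' hs
        · exact h'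
      have e3 : q.imJ = 0 := by
        have : (p.re + q.re) * q.imJ = 0 := by nlinarith [h3]
        rcases mul_eq_zero.mp this with h' | h'
        · exact absurd h' hs
        · exact h'
      have e4 : q.imK = 0 := by
        have : (p.re + q.re) * q.imK = 0 := by nlinarith [h4]
        rcases mul_eq_zero.mp this with h' | h'
        · exact absurd h' hs
        · exact h'
      have : (p.re + q.re) ^ 2 + (p.imI ^ 2 + p.imJ ^ 2 + p.imK ^ 2) = 0 := by
        rw [e2, e3, e4] at h1; nlinarith [h1]
      have : p.re + q.re = 0 := by nlinarith [sq_nonneg (p.re + q.re), sq_nonneg p.imI, sq_nonneg p.imJ, sq_nonneg p.imK]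
      exact hs this
    refine ⟨hre, ?_⟩
    have hnsq : Quaternion.normSq p.im = Quaternion.normSq q.im := by
      simp only [Quaternion.normSq_def', Quaternion.re_im, Quaternion.imI_im,
        Quaternion.imJ_im, Quaternion.imK_im]
      nlinarith [h1, hre]
    have e : ‖p.im‖ * ‖p.im‖ = ‖q.im‖ * ‖q.im‖ := by
      rw [← Quaternion.normSq_eq_norm_mul_self, ← Quaternion.normSq_eq_norm_mul_self, hnsq]
    exact mul_self_inj (norm_nonneg _) (norm_nonneg _) |>.mp e
  have hcomm : Commute (star q) D := by
    have c1 : Commute (star q) (((Quaternion.normSq p : ℝ) : ℍ)) :=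
      (Quaternion.coe_commute _ _).symm
    have c2 : Commute (star q) (2 : ℍ) := by
      have : (2 : ℍ) = ((2 : ℝ) : ℍ) := by norm_cast
      rw [this]; exact (Quaternion.coe_commute _ _).symm
    have c3 : Commute (star q) ((p.re : ℝ) : ℍ) := (Quaternion.coe_commute _ _).symm
    rw [hDdef]
    exact (c1.add_right ((c2.mul_right c3).mul_right (Commute.refl _))).add_right
      ((Commute.refl _).pow_right 2)
  have hcomm' : Commute (star q) D⁻¹ := hcomm.inv_right₀
  have h1 : p * star p = ((Quaternion.normSq p : ℝ) : ℍ) := Quaternion.self_mul_star p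
  have h2 : p + star p = ((2 * p.re : ℝ) : ℍ) := p.self_add_star'
  have key : p * (star p + star q) + (star p + star q) * star q = D := by
    calc p * (star p + star q) + (star p + star q) * star q
        = p * star p + (p + star p) * star q + (star q) ^ 2 := by noncomm_ring
      _ = D := by rw [h1, h2, hDdef]; push_cast; noncomm_ring; simp [two_smul]; rw [show ((2:ℝ):ℍ) = 2 by norm_cast, two_mul]; abel
  have expand : p * ((star p + star q) * D⁻¹) + ((star p + star q) * D⁻¹) * star q
      = (p * (star p + star q)) * D⁻¹ + (star p + star q) * (D⁻¹ * star q) := by noncomm_ring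
  rw [expand, ← hcomm'.eq, ← mul_assoc, ← add_mul, key, mul_inv_cancel₀ hD]
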